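/- Let p ≥ 5 be a prime, let t be a positive integer, and let N be a positive integer with N ≥ 12·x_t². Suppose that 12·g*(p,N)² > N·∏_{ℓ|N, ℓ prime}(1 + 1/ℓ). Then N_t divides N. -/

import Mathlib

open Filter Real Finset

/-- A prime primitive root modulo `p`: a prime `ℓ` whose residue class has
multiplicative order `p - 1` in `(ℤ/pℤ)ˣ`. -/
def IsPrimePrimitiveRoot (p ℓ : ℕ) : Prop :=
  ℓ.Prime ∧ orderOf (ℓ : ZMod p) = p - 1

/-- `pprNth p t` is `x_t`, the `t`-th smallest prime primitive root modulo `p` (1-indexed). -/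
noncomputable def pprNth (p t : ℕ) : ℕ :=
  Nat.nth (IsPrimePrimitiveRoot p) (t - 1)

/-- `pprProd p t` is `N_t = x_1 ⋯ x_t`, with `N_0 = 1`. -/
noncomputable def pprProd (p t : ℕ) : ℕ :=
  ∏ i ∈ Finset.range t, Nat.nth (IsPrimePrimitiveRoot p) i

/-- `gstar p N` is `g*(p, N)`, the least prime primitive root modulo `p` not dividing `N`. -/
noncomputable def gstar (p N : ℕ) : ℕ :=
  sInf {ℓ : ℕ | IsPrimePrimitiveRoot p ℓ ∧ ¬ ℓ ∣ N}

/-- The generalized Riemann hypothesis for Dirichlet L-functions. -/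
def GRH : Prop :=
  ∀ (q : ℕ) [NeZero q] (χ : DirichletCharacter ℂ q) (s : ℂ),
    0 < s.re → s.re < 1 → DirichletCharacter.LFunction χ s = 0 → s.re = 1 / 2

/-- `primesCount a q x = π_{a,q}(x)`, the number of primes `ℓ ≤ x` with `ℓ ≡ a (mod q)`. -/
noncomputable def primesCount (a q : ℕ) (x : ℝ) : ℕ :=
  ((Finset.range (⌊x⌋₊ + 1)).filter fun ℓ => ℓ.Prime ∧ ℓ % q = a % q).card


lemma ppr_infinite (p : ℕ) (hp : p.Prime) : {ℓ | IsPrimePrimitiveRoot p ℓ}.Infinite := by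
  haveI : Fact p.Prime := ⟨hp⟩
  obtain ⟨g, hg⟩ := IsCyclic.exists_ofOrder_eq_natCard (α := (ZMod p)ˣ)
  have hg' : orderOf g = p - 1 := by
    rw [hg, Nat.card_eq_fintype_card, ZMod.card_units_eq_totient, Nat.totient_prime hp]
  have hinf := Nat.infinite_setOfPred_prime_and_eq_mod (q := p) (a := (g : ZMod p)) g.isUnit
  refine hinf.mono ?_
  rintro ℓ ⟨hℓ, hval⟩
  exact ⟨hℓ, by rw [hval, orderOf_units, hg']⟩

theorem pprProd_dvd_of_comp_fails (p : ℕ) (hp : p.Prime) (hp5 : 5 ≤ p)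
    (t : ℕ) (ht : 0 < t) (N : ℕ) (hN0 : 0 < N) (hN : 12 * pprNth p t ^ 2 ≤ N)
    (hfail : (N : ℝ) * ∏ ℓ ∈ N.primeFactors, (1 + 1 / (ℓ : ℝ)) < 12 * (gstar p N : ℝ) ^ 2) :
    pprProd p t ∣ N := by
  haveI : Fact p.Prime := ⟨hp⟩
  have hinf := ppr_infinite p hp
  set f := Nat.nth (IsPrimePrimitiveRoot p) with hf
  have hdvd : ∀ i ∈ Finset.range t, f i ∣ N := by
    intro i hi
    rw [Finset.mem_range] at hi
    by_contra h
    have hmem : f i ∈ {ℓ : ℕ | IsPrimePrimitiveRoot p ℓ ∧ ¬ ℓ ∣ N} :=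
      ⟨Nat.nth_mem_of_infinite hinf i, h⟩
    have h1 : gstar p N ≤ f i := Nat.sInf_le hmem
    have h2 : f i ≤ pprNth p t := Nat.nth_monotone hinf (by omega : i ≤ t - 1)
    have h3 : 12 * gstar p N ^ 2 ≤ N := by
      refine le_trans ?_ hN
      have := Nat.pow_le_pow_left (h1.trans h2) 2
      omega
    have h3' : (12 : ℝ) * (gstar p N : ℝ) ^ 2 ≤ (N : ℝ) := by exact_mod_cast h3
    have h4 : (N : ℝ) ≤ (N : ℝ) * ∏ ℓ ∈ N.primeFactors, (1 + 1 / (ℓ : ℝ)) := by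
      refine le_mul_of_one_le_right (by positivity) ?_
      calc (1 : ℝ) = ∏ _ℓ ∈ N.primeFactors, (1 : ℝ) := by simp
        _ ≤ _ := Finset.prod_le_prod (fun ℓ _ => zero_le_one)
            (fun ℓ _ => le_add_of_nonneg_right (by positivity))
    linarith
  have hinj : Set.InjOn f ↑(Finset.range t) := fun a _ b _ hab =>
    Nat.nth_injective hinf hab
  have heq : pprProd p t = ∏ ℓ ∈ (Finset.range t).image f, ℓ := by
    rw [Finset.prod_image (fun a ha b hb hab => hinj ha hb hab)]
    rfl
  rw [heq]
  refine Finset.prod_primes_dvd N (fun a ha => ?_) (fun a ha => ?_)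
  · obtain ⟨i, hi, rfl⟩ := Finset.mem_image.mp ha
    exact (Nat.nth_mem_of_infinite hinf i).1.prime
  · obtain ⟨i, hi, rfl⟩ := Finset.mem_image.mp ha
    exact hdvd i hi
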